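/- Let q be a word and u = u₁ + ⋯ + uₙ a sum of words over a set of variables X. The inequality q ≤ u holds in the 3-element ai-semiring S_{53} if and only if: (1) some word uᵢ has length at least 2; (2) every variable of q occurs in some word of u; and (3) for every two-element multiset {x,y} of variables occurring as a length-2 subword of q, there exist indices i and a length-2 subword w of uᵢ with all variables of w contained in {x,y}. -/

import Mathlib

def mul53 (x y : Fin 3) : Fin 3 :=
  ![![0, 1, 2],
    ![1, 2, 2],
    ![2, 2, 2]] x y

lemma mul53_val : ∀ x y : Fin 3, (mul53 x y).val = min (x.val + y.val) 2 := by decide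

lemma eval_val (φ : ℕ → Fin 3) (w : List ℕ) :
    ((w.map φ).foldr mul53 0).val = min ((w.map fun x => (φ x).val).sum) 2 := by
  induction w with
  | nil => rfl
  | cons a l ih =>
    simp only [List.map_cons, List.foldr_cons, List.sum_cons, mul53_val, ih]
    have : (φ a).val ≤ 2 := Nat.lt_succ_iff.mp (φ a).isLt
    omega

lemma le_foldr_max {l : List (Fin 3)} {b : Fin 3} (hb : b ∈ l) : b ≤ l.foldr max 0 := by
  induction l with
  | nil => cases hb
  | cons a l ih =>
    rcases List.mem_cons.mp hb with h | h
    · exact h ▸ le_max_left _ _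
    · exact le_trans (ih h) (le_max_right _ _)

lemma exists_of_le_foldr {l : List (Fin 3)} {b : Fin 3} (h : b ≤ l.foldr max 0) :
    b = 0 ∨ ∃ a ∈ l, b ≤ a := by
  induction l with
  | nil => exact Or.inl (le_antisymm h (Fin.zero_le _))
  | cons a l ih =>
    rcases le_max_iff.mp h with h | h
    · exact Or.inr ⟨a, List.mem_cons_self, h⟩
    · rcases ih h with h | ⟨c, hc, hbc⟩
      · exact Or.inl h
      · exact Or.inr ⟨c, List.mem_cons_of_mem _ hc, hbc⟩

lemma sum_map_mono {s t : Multiset ℕ} (f : ℕ → ℕ) (h : s ≤ t) :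
    (s.map f).sum ≤ (t.map f).sum := by
  obtain ⟨r, rfl⟩ := Multiset.le_iff_exists_add.mp h
  simp

lemma extract_two (P : ℕ → Bool) (l : List ℕ)
    (h : 2 ≤ (l.filter P).length) :
    ∃ x y, ({x, y} : Multiset ℕ) ≤ ↑l ∧ P x ∧ P y := by
  cases hf : l.filter P with
  | nil => rw [hf] at h; simp at h
  | cons x lf' =>
    cases hlf : lf' with
    | nil => rw [hf, hlf] at h; simp at h
    | cons y r =>
      subst hlf
      refine ⟨x, y, ?_, ?_, ?_⟩
      · have h1 : ({x, y} : Multiset ℕ) ≤ ↑(l.filter P) := by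
          rw [hf]
          exact (List.Sublist.cons₂ _ (List.Sublist.cons₂ _ (List.nil_sublist r))).subperm
        exact le_trans h1 (List.filter_sublist (l := l)).subperm
      · exact (List.mem_filter.mp (hf ▸ List.mem_cons_self : x ∈ l.filter P)).2
      · exact (List.mem_filter.mp (hf ▸ List.mem_cons_of_mem _ (List.mem_cons_self) : y ∈ l.filter P)).2

lemma sum_le_filterlen (f : ℕ → ℕ) (P : ℕ → Bool) (l : List ℕ)
    (hf : ∀ z ∈ l, f z ≤ 1) (hP : ∀ z ∈ l, f z ≠ 0 → P z = true) :
    (l.map f).sum ≤ (l.filter P).length := by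
  induction l with
  | nil => simp
  | cons a l ih =>
    have ha := hf a (List.mem_cons_self)
    have ih' := ih (fun z hz => hf z (List.mem_cons_of_mem _ hz))
      (fun z hz => hP z (List.mem_cons_of_mem _ hz))
    rw [List.map_cons, List.sum_cons, List.filter_cons]
    by_cases h0 : f a = 0
    · rw [h0]; split <;> simp <;> omega
    · rw [hP a (List.mem_cons_self) h0]
      simp only [if_true, List.length_cons]
      omega

lemma exists_nonzero_of_sum_pos (f : ℕ → ℕ) (l : List ℕ) (h : 0 < (l.map f).sum) :
    ∃ x ∈ l, f x ≠ 0 := by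
  by_contra hc
  push_neg at hc
  have : (l.map f).sum = 0 := List.sum_eq_zero (by
    intro v hv
    rcases List.mem_map.mp hv with ⟨x, hx, rfl⟩
    exact hc x hx)
  omega

/-- Characterization of the nontrivial inequalities `q ≤ u₁ + ⋯ + uₙ` valid in S_{53}:
the inequality holds iff (1) some `uᵢ` has length ≥ 2; (2) every variable of `q`
occurs in some word of `u`; (3) for every length-2 subword {x,y} of `q` there is a
length-2 subword of some `uᵢ` whose variables are contained in {x,y}. Words are
nonempty lists of variables (variables = ℕ), identified up to multiset equality;
a length-2 subword is a degree-2 multiset divisor. Addition of S_{53} is `max` in the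
chain 1 < a < ∞ (encoded 0 < 1 < 2). -/
theorem stmt14 : ∀ (q : List ℕ) (u : List (List ℕ)),
    q ≠ [] → u ≠ [] → (∀ w ∈ u, w ≠ []) →
    (∀ w ∈ u, (↑w : Multiset ℕ) ≠ (↑q : Multiset ℕ)) →
    ((∀ φ : ℕ → Fin 3,
        max ((q.map φ).foldr mul53 0)
            ((u.map fun w => (w.map φ).foldr mul53 0).foldr max 0)
          = (u.map fun w => (w.map φ).foldr mul53 0).foldr max 0)
      ↔ ((∃ w ∈ u, 2 ≤ w.length) ∧
         (∀ x ∈ q, ∃ w ∈ u, x ∈ w) ∧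
         (∀ x y : ℕ, ({x, y} : Multiset ℕ) ≤ (↑q : Multiset ℕ) →
            ∃ w ∈ u, ∃ p : Multiset ℕ, Multiset.card p = 2 ∧
              p ≤ (↑w : Multiset ℕ) ∧ ∀ z ∈ p, z = x ∨ z = y))) := by
  intro q u hq hu hune hnt
  constructor
  · intro H
    have Hle : ∀ φ : ℕ → Fin 3, ((q.map φ).foldr mul53 0) ≤
        ((u.map fun w => (w.map φ).foldr mul53 0).foldr max 0) :=
      fun φ => max_eq_right_iff.mp (H φ)
    -- a helper to extract a witness word whose evaluation is ≥ the eval of q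
    have Hwit : ∀ φ : ℕ → Fin 3, 0 < ((q.map φ).foldr mul53 0).val →
        ∃ w ∈ u, ((q.map φ).foldr mul53 0).val ≤ ((w.map φ).foldr mul53 0).val := by
      intro φ hpos
      rcases exists_of_le_foldr (Hle φ) with h0 | ⟨a, ha, hba⟩
      · rw [h0] at hpos; simp at hpos
      · rcases List.mem_map.mp ha with ⟨w, hw, rfl⟩
        exact ⟨w, hw, Fin.le_def.mp hba⟩
    -- (2)
    have H2 : ∀ x ∈ q, ∃ w ∈ u, x ∈ w := by
      intro x hx
      set φ : ℕ → Fin 3 := fun z => if z = x then 2 else 0 with hφ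
      have hval : ∀ z, (φ z).val = if z = x then 2 else 0 := by
        intro z; simp only [hφ]; split <;> rfl
      have hsum : 2 ≤ ((q.map fun z => (φ z).val).sum) := by
        have hm : (2:ℕ) ∈ q.map fun z => (φ z).val :=
          List.mem_map.mpr ⟨x, hx, by rw [hval]; simp⟩
        exact List.single_le_sum (fun _ _ => Nat.zero_le _) _ hm
      have hQ : ((q.map φ).foldr mul53 0).val = 2 := by rw [eval_val]; omega
      obtain ⟨w, hw, hwge⟩ := Hwit φ (by omega)
      rw [hQ, eval_val] at hwge
      have hpos : 0 < (w.map fun z => (φ z).val).sum := by omega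
      obtain ⟨z, hz, hz0⟩ := exists_nonzero_of_sum_pos _ _ hpos
      rw [hval] at hz0
      by_cases hzx : z = x
      · exact ⟨w, hw, hzx ▸ hz⟩
      · simp [hzx] at hz0
    -- (3)
    have H3 : ∀ x y : ℕ, ({x, y} : Multiset ℕ) ≤ (↑q : Multiset ℕ) →
        ∃ w ∈ u, ∃ p : Multiset ℕ, Multiset.card p = 2 ∧
          p ≤ (↑w : Multiset ℕ) ∧ ∀ z ∈ p, z = x ∨ z = y := by
      intro x y hxy
      set φ : ℕ → Fin 3 := fun z => if z = x ∨ z = y then 1 else 0 with hφ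
      have hval : ∀ z, (φ z).val = if z = x ∨ z = y then 1 else 0 := by
        intro z; simp only [hφ]; split <;> rfl
      have hsum : 2 ≤ ((q.map fun z => (φ z).val).sum) := by
        have h1 : (({x, y} : Multiset ℕ).map fun z => (φ z).val).sum ≤
            (((↑q : Multiset ℕ)).map fun z => (φ z).val).sum := sum_map_mono _ hxy
        have h2 : (({x, y} : Multiset ℕ).map fun z => (φ z).val).sum = 2 := by
          simp [hval]
        have h3 : (((↑q : Multiset ℕ)).map fun z => (φ z).val).sum =
            ((q.map fun z => (φ z).val).sum) := by simp
        omega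
      have hQ : ((q.map φ).foldr mul53 0).val = 2 := by rw [eval_val]; omega
      obtain ⟨w, hw, hwge⟩ := Hwit φ (by omega)
      rw [hQ, eval_val] at hwge
      have hsw : 2 ≤ (w.map fun z => (φ z).val).sum := by omega
      have hfl : 2 ≤ (w.filter (fun z => decide (z = x ∨ z = y))).length := by
        refine le_trans hsw (sum_le_filterlen _ _ _ ?_ ?_)
        · intro z _; rw [hval]; split <;> omega
        · intro z _ hz0
          rw [hval] at hz0
          by_cases h : z = x ∨ z = y
          · simp [h]
          · simp [h] at hz0
      obtain ⟨a, b, hab, hPa, hPb⟩ := extract_two _ _ hfl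
      refine ⟨w, hw, {a, b}, ?_, hab, ?_⟩
      · simp
      · intro z hz
        rcases Multiset.mem_cons.mp hz with rfl | hz
        · exact of_decide_eq_true hPa
        · rw [Multiset.mem_singleton.mp hz]
          exact of_decide_eq_true hPb
    -- (1) follows from H2, H3 and nontriviality
    refine ⟨?_, H2, H3⟩
    cases q with
    | nil => exact absurd rfl hq
    | cons x q' =>
      cases q' with
      | nil =>
        obtain ⟨w, hw, hxw⟩ := H2 x (List.mem_cons_self)
        refine ⟨w, hw, ?_⟩
        cases w with
        | nil => exact absurd rfl (hune _ hw)
        | cons a w' =>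
          cases w' with
          | nil =>
            exfalso
            rcases List.mem_singleton.mp hxw with rfl
            exact hnt _ hw rfl
          | cons b w'' => simp
      | cons y q'' =>
        have hxy : ({x, y} : Multiset ℕ) ≤ (↑(x :: y :: q'') : Multiset ℕ) := by
          exact (List.Sublist.cons₂ _ (List.Sublist.cons₂ _ (List.nil_sublist q''))).subperm
        obtain ⟨w, hw, p, hp2, hple, _⟩ := H3 x y hxy
        refine ⟨w, hw, ?_⟩
        have := Multiset.card_le_card hple
        simpa [hp2] using this
  · rintro ⟨H1, H2, H3⟩ φ
    rw [max_eq_right_iff, Fin.le_def, eval_val]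
    set S := (q.map fun z => (φ z).val).sum with hS
    have hwle : ∀ w ∈ u, ((w.map φ).foldr mul53 0).val ≤
        ((u.map fun w : List ℕ => (w.map φ).foldr mul53 0).foldr max 0).val :=
      fun w hw => Fin.le_def.mp (le_foldr_max (List.mem_map.mpr ⟨w, hw, rfl⟩))
    rcases Nat.eq_zero_or_pos S with h0 | hpos
    · rw [h0]; simp
    · rcases Nat.lt_or_ge S 2 with hS1 | hS2
      · -- S = 1
        obtain ⟨x, hx, hx0⟩ := exists_nonzero_of_sum_pos _ _ (by simpa using hpos)
        obtain ⟨w, hw, hxw⟩ := H2 x hx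
        have hm : (φ x).val ∈ w.map fun z => (φ z).val := List.mem_map.mpr ⟨x, hxw, rfl⟩
        have hsw : 1 ≤ (w.map fun z => (φ z).val).sum :=
          le_trans (by omega) (List.single_le_sum (fun _ _ => Nat.zero_le _) _ hm)
        have := hwle w hw
        rw [eval_val] at this
        omega
      · -- S ≥ 2
        by_cases hbig : ∃ x ∈ q, (φ x).val = 2
        · obtain ⟨x, hx, hx2⟩ := hbig
          obtain ⟨w, hw, hxw⟩ := H2 x hx
          have hm : (φ x).val ∈ w.map fun z => (φ z).val := List.mem_map.mpr ⟨x, hxw, rfl⟩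
          have hsw : 2 ≤ (w.map fun z => (φ z).val).sum :=
            le_trans (by omega) (List.single_le_sum (fun _ _ => Nat.zero_le _) _ hm)
          have := hwle w hw
          rw [eval_val] at this
          omega
        · push_neg at hbig
          have hall : ∀ z ∈ q, (φ z).val ≤ 1 := by
            intro z hz
            have := Nat.lt_succ_iff.mp (φ z).isLt
            have := hbig z hz
            omega
          have hfl : 2 ≤ (q.filter (fun z => decide ((φ z).val ≠ 0))).length := by
            refine le_trans hS2 (sum_le_filterlen _ _ _ hall ?_)
            intro z _ hz0; simpa using hz0
          obtain ⟨x, y, hxy, hPx, hPy⟩ := extract_two _ _ hfl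
          have hPx' : (φ x).val ≠ 0 := of_decide_eq_true hPx
          have hPy' : (φ y).val ≠ 0 := of_decide_eq_true hPy
          obtain ⟨w, hw, p, hp2, hple, hpmem⟩ := H3 x y hxy
          obtain ⟨a, b, rfl⟩ := Multiset.card_eq_two.mp hp2
          have hfa : 1 ≤ (φ a).val := by
            rcases hpmem a (Multiset.mem_cons_self _ _) with rfl | rfl <;> omega
          have hfb : 1 ≤ (φ b).val := by
            rcases hpmem b (by simp) with rfl | rfl <;> omega
          have hsw : 2 ≤ (w.map fun z => (φ z).val).sum := by
            have h1 := sum_map_mono (fun z => (φ z).val) hple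
            have h2 : (({a, b} : Multiset ℕ).map fun z => (φ z).val).sum =
                (φ a).val + (φ b).val := by simp
            have h3 : (((↑w : Multiset ℕ)).map fun z => (φ z).val).sum =
                ((w.map fun z => (φ z).val).sum) := by simp
            omega
          have := hwle w hw
          rw [eval_val] at this
          omega
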